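/- Let n ≥ 1 and let A be a commutative ℚ-algebra. The additive map res : Lⁿ(A) → A, f ↦ coeff_{(−1,…,−1)}(f), is surjective, and its kernel is exactly the set of all sums Σ_{j=1}^n ∂hⱼ/∂tⱼ with h₁, …, hₙ ∈ Lⁿ(A). (Equivalently, the residue induces an isomorphism Ω̃ⁿ/dΩ̃ⁿ⁻¹ ≅ A for continuous differential forms of iterated Laurent series.) -/

import Mathlib

noncomputable section

open scoped Classical TensorProduct

/-- Iterated Laurent series carrier together with its ring structure. -/
def IterAux (A : Type) [CommRing A] : ℕ → (T : Type) × CommRing T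
  | 0 => ⟨A, inferInstance⟩
  | n+1 =>
    letI := (IterAux A n).2
    ⟨LaurentSeries (IterAux A n).1, inferInstance⟩

/-- `IterLaurent A n = A((t₁))…((tₙ))`, the ring of iterated Laurent series:
`IterLaurent A 0 = A` and `IterLaurent A (n+1) = (IterLaurent A n)((t_{n+1}))`. -/
def IterLaurent (A : Type) [CommRing A] (n : ℕ) : Type := (IterAux A n).1

instance iterLaurentCommRing (A : Type) [CommRing A] (n : ℕ) : CommRing (IterLaurent A n) :=
  (IterAux A n).2

/-- View an iterated Laurent series as a Laurent series over the previous stage. -/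
def IterLaurent.down {A : Type} [CommRing A] {n : ℕ} (f : IterLaurent A (n+1)) :
    LaurentSeries (IterLaurent A n) := f

/-- View a Laurent series over the previous stage as an iterated Laurent series. -/
def IterLaurent.up {A : Type} [CommRing A] {n : ℕ} (f : LaurentSeries (IterLaurent A n)) :
    IterLaurent A (n+1) := f

/-- The coefficient of `t^l = t₁^{l₁}⋯tₙ^{lₙ}` in an iterated Laurent series. -/
def iterCoeff (A : Type) [CommRing A] : {n : ℕ} → IterLaurent A n → (Fin n → ℤ) → A
  | 0, f, _ => f
  | n+1, f, l => iterCoeff A (f.down.coeff (l (Fin.last n))) (fun i => l i.castSucc)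

/-- The lexicographic order on `ℤⁿ` "from the last coordinate":
`l < l'` iff `lₙ < l'ₙ`, or `lₙ = l'ₙ` and `(l₁,…,l_{n-1}) < (l'₁,…,l'_{n-1})`. -/
def lexLt : {n : ℕ} → (Fin n → ℤ) → (Fin n → ℤ) → Prop
  | 0, _, _ => False
  | n+1, a, b => a (Fin.last n) < b (Fin.last n) ∨
      (a (Fin.last n) = b (Fin.last n) ∧
        lexLt (fun i => a i.castSucc) (fun i => b i.castSucc))

/-- The monomial `t^l = t₁^{l₁} ⋯ tₙ^{lₙ}`. -/
def tpow (A : Type) [CommRing A] : {n : ℕ} → (Fin n → ℤ) → IterLaurent A n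
  | 0, _ => 1
  | n+1, l => IterLaurent.up
      (HahnSeries.single (l (Fin.last n)) (tpow A (fun i => l i.castSucc)))

/-- Constant series, as a ring homomorphism `A →+* A((t₁))…((tₙ))`. -/
def iterC (A : Type) [CommRing A] : (n : ℕ) → A →+* IterLaurent A n
  | 0 => RingHom.id A
  | n+1 => (HahnSeries.C : (IterLaurent A n) →+* LaurentSeries (IterLaurent A n)).comp (iterC A n)

/-- The truncation `f₋ = Σ_{l<0} coeff_l(f) t^l` (strictly negative part w.r.t. the
lexicographic order from the last coordinate). -/
def truncNeg (A : Type) [CommRing A] : {n : ℕ} → IterLaurent A n → IterLaurent A n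
  | 0, _ => 0
  | n+1, f => IterLaurent.up
      { coeff := fun k =>
          if k < 0 then f.down.coeff k else if k = 0 then truncNeg A (f.down.coeff 0) else 0
        isPWO_support' := by
          refine (f.down.isPWO_support.union (Set.finite_singleton 0).isPWO).mono ?_
          intro k hk
          simp only [Function.mem_support] at hk
          rcases lt_trichotomy k 0 with h | h | h
          · left
            simp only [if_pos h] at hk
            exact hk
          · right; simp [h]
          · exfalso; apply hk; rw [if_neg (not_lt.2 h.le), if_neg h.ne'] }

/-- The truncation `f_{≤0} = Σ_{l≤0} coeff_l(f) t^l` (nonpositive part). -/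
def truncNonpos (A : Type) [CommRing A] : {n : ℕ} → IterLaurent A n → IterLaurent A n
  | 0, f => f
  | n+1, f => IterLaurent.up
      { coeff := fun k =>
          if k < 0 then f.down.coeff k else if k = 0 then truncNonpos A (f.down.coeff 0) else 0
        isPWO_support' := by
          refine (f.down.isPWO_support.union (Set.finite_singleton 0).isPWO).mono ?_
          intro k hk
          simp only [Function.mem_support] at hk
          rcases lt_trichotomy k 0 with h | h | h
          · left
            simp only [if_pos h] at hk
            exact hk
          · right; simp [h]
          · exfalso; apply hk; rw [if_neg (not_lt.2 h.le), if_neg h.ne'] }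

/-- `V₊(A)`: iterated Laurent series with constant term `1` and no nonzero
coefficients below `0`. -/
def MemVplus (A : Type) [CommRing A] {n : ℕ} (f : IterLaurent A n) : Prop :=
  iterCoeff A f 0 = 1 ∧ ∀ l, lexLt l 0 → iterCoeff A f l = 0

/-- `V₋(A)`: iterated Laurent series with constant term `1`, no nonzero coefficients
above `0`, and `f - 1` nilpotent in `Lⁿ(A)`. -/
def MemVminus (A : Type) [CommRing A] {n : ℕ} (f : IterLaurent A n) : Prop :=
  iterCoeff A f 0 = 1 ∧ (∀ l, lexLt 0 l → iterCoeff A f l = 0) ∧ IsNilpotent (f - 1)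

/-- `(Lⁿ𝔾ₘ)⁰(A)`: invertible constant term and nilpotent strictly negative part. -/
def MemZeroMul (A : Type) [CommRing A] {n : ℕ} (f : IterLaurent A n) : Prop :=
  IsUnit (iterCoeff A f 0) ∧ IsNilpotent (truncNeg A f)

/-- `(Lⁿ𝔾ₘ)^♯(A)`: constant term `1 + nilpotent` and nilpotent strictly negative part. -/
def MemSharpMul (A : Type) [CommRing A] {n : ℕ} (f : IterLaurent A n) : Prop :=
  IsNilpotent (iterCoeff A f 0 - 1) ∧ IsNilpotent (truncNeg A f)

/-- `(Lⁿ𝔾ₐ)^♯(A)`: nilpotent nonpositive part. -/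
def MemSharpAdd (A : Type) [CommRing A] {n : ℕ} (g : IterLaurent A n) : Prop :=
  IsNilpotent (truncNonpos A g)

/-- The residue: the coefficient of `t₁⁻¹⋯tₙ⁻¹`. -/
def iterRes (A : Type) [CommRing A] {n : ℕ} (f : IterLaurent A n) : A :=
  iterCoeff A f (fun _ => -1)

/-- The derivative with respect to the outer Laurent variable:
`coeff k ↦ (k+1) • coeff (k+1)`. -/
def hahnDerivHom (B : Type) [CommRing B] : LaurentSeries B →+ LaurentSeries B where
  toFun f :=
    { coeff := fun k => (k + 1) • f.coeff (k + 1)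
      isPWO_support' := by
        have himg : (Function.support fun k : ℤ => (k + 1) • f.coeff (k + 1)) ⊆
            (fun k : ℤ => k - 1) '' f.support := by
          intro k hk
          simp only [Function.mem_support] at hk
          refine ⟨k + 1, ?_, by ring⟩
          intro h0
          apply hk
          rw [h0, smul_zero]
        exact (f.isPWO_support.image_of_monotone (fun a b hab => by omega)).mono himg }
  map_zero' := by ext k; simp
  map_add' f g := by ext k; simp [smul_add]

/-- Coefficientwise application of an additive map, on Laurent series. -/
def hahnMapHom {B C : Type} [CommRing B] [CommRing C] (φ : B →+ C) :
    HahnSeries ℤ B →+ HahnSeries ℤ C where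
  toFun f := f.map φ
  map_zero' := by ext; simp
  map_add' f g := by ext; simp

/-- The formal partial derivative `∂/∂tⱼ` as an additive map: it is characterized by
`coeff_l (∂f/∂tⱼ) = (lⱼ + 1) • coeff_{l + eⱼ} f`. -/
def pderivHom (A : Type) [CommRing A] : {n : ℕ} → Fin n → (IterLaurent A n →+ IterLaurent A n)
  | 0, j => j.elim0
  | n+1, j =>
    show HahnSeries ℤ (IterLaurent A n) →+ HahnSeries ℤ (IterLaurent A n) from
    if h : (j : ℕ) < n then
      hahnMapHom (B := IterLaurent A n) (C := IterLaurent A n) (pderivHom A (⟨j, h⟩ : Fin n))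
    else hahnDerivHom (IterLaurent A n)

/-- The formal partial derivative `∂f/∂tⱼ` of an iterated Laurent series. -/
def pderivIter (A : Type) [CommRing A] {n : ℕ} (j : Fin n) (f : IterLaurent A n) :
    IterLaurent A n := pderivHom A j f

/-- Coefficientwise application of a ring homomorphism, on Laurent series. -/
def hahnMapRingHom {B C : Type} [CommRing B] [CommRing C] (φ : B →+* C) :
    HahnSeries ℤ B →+* HahnSeries ℤ C where
  toFun f := f.map φ
  map_one' := by
    ext g
    by_cases h : g = 0 <;> simp [h]
  map_mul' x y := by
    have h := HahnSeries.map_mul (Γ := ℤ) (f := (φ : B →ₙ+* C)) (x := x) (y := y)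
    ext g
    have := congrArg (fun z : HahnSeries ℤ C => z.coeff g) h
    exact this
  map_zero' := by ext; simp
  map_add' x y := by ext; simp

/-- The ring homomorphism `Lⁿ(A) →+* Lⁿ(B)` induced by `σ : A →+* B`
(functoriality of iterated Laurent series). -/
def iterMap {A B : Type} [CommRing A] [CommRing B] (σ : A →+* B) :
    (n : ℕ) → (IterLaurent A n →+* IterLaurent B n)
  | 0 => σ
  | n+1 =>
    show HahnSeries ℤ (IterLaurent A n) →+* HahnSeries ℤ (IterLaurent B n) from
    hahnMapRingHom (B := IterLaurent A n) (C := IterLaurent B n) (iterMap σ n)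

theorem tpow_zero (A : Type) [CommRing A] : ∀ {n : ℕ}, tpow A (0 : Fin n → ℤ) = 1
  | 0 => rfl
  | n+1 => by
    show IterLaurent.up (HahnSeries.single ((0 : Fin (n+1) → ℤ) (Fin.last n))
      (tpow A fun i => (0 : Fin (n+1) → ℤ) i.castSucc)) = 1
    have h1 : (fun i : Fin n => (0 : Fin (n+1) → ℤ) i.castSucc) = (0 : Fin n → ℤ) := rfl
    rw [h1, tpow_zero A]
    exact congrArg IterLaurent.up (HahnSeries.single_zero_one)

theorem tpow_mul_tpow (A : Type) [CommRing A] :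
    ∀ {n : ℕ} (l l' : Fin n → ℤ), tpow A l * tpow A l' = tpow A (l + l')
  | 0, _, _ => one_mul 1
  | n+1, l, l' => by
    show IterLaurent.up (HahnSeries.single (l (Fin.last n)) (tpow A fun i => l i.castSucc) *
        HahnSeries.single (l' (Fin.last n)) (tpow A fun i => l' i.castSucc)) = _
    rw [HahnSeries.single_mul_single, tpow_mul_tpow A]
    rfl

/-- The variable `tᵢ` as a unit of `Lⁿ(A)`. -/
def tUnit (A : Type) [CommRing A] (n : ℕ) (i : Fin n) : (IterLaurent A n)ˣ where
  val := tpow A (fun j => if j = i then 1 else 0)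
  inv := tpow A (fun j => if j = i then -1 else 0)
  val_inv := by
    rw [tpow_mul_tpow A]
    have : ((fun j : Fin n => if j = i then (1:ℤ) else 0) + fun j => if j = i then -1 else 0)
        = 0 := by funext j; by_cases h : j = i <;> simp [h]
    rw [this, tpow_zero A]
  inv_val := by
    rw [tpow_mul_tpow A]
    have : ((fun j : Fin n => if j = i then (-1:ℤ) else 0) + fun j => if j = i then 1 else 0)
        = 0 := by funext j; by_cases h : j = i <;> simp [h]
    rw [this, tpow_zero A]

/-- A unit of `A` as a constant unit of `Lⁿ(A)`. -/
def constUnit (A : Type) [CommRing A] (n : ℕ) (a : Aˣ) : (IterLaurent A n)ˣ :=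
  Units.map (iterC A n).toMonoidHom a

section Statement7Aux
variable (A : Type) [CommRing A]

lemma down_coeff_zero (n : ℕ) (k : ℤ) :
    (IterLaurent.down (0 : IterLaurent A (n+1))).coeff k = 0 := rfl

lemma iterCoeff_zero : ∀ {n : ℕ} (l : Fin n → ℤ), iterCoeff A (0 : IterLaurent A n) l = 0
  | 0, _ => rfl
  | n+1, l => by
    show iterCoeff A ((IterLaurent.down (0 : IterLaurent A (n+1))).coeff _) _ = 0
    rw [down_coeff_zero]
    exact iterCoeff_zero _

lemma down_coeff_add {n : ℕ} (f g : IterLaurent A (n+1)) (k : ℤ) :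
    (IterLaurent.down (f + g)).coeff k = f.down.coeff k + g.down.coeff k := rfl

lemma iterCoeff_add : ∀ {n : ℕ} (f g : IterLaurent A n) (l : Fin n → ℤ),
    iterCoeff A (f + g) l = iterCoeff A f l + iterCoeff A g l
  | 0, _, _, _ => rfl
  | n+1, f, g, l => by
    show iterCoeff A ((IterLaurent.down (f + g)).coeff _) _ = _
    rw [down_coeff_add]
    exact iterCoeff_add _ _ _

lemma iterRes_zero (n : ℕ) : iterRes A (0 : IterLaurent A n) = 0 := iterCoeff_zero A _

lemma iterRes_add {n : ℕ} (f g : IterLaurent A n) :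
    iterRes A (f + g) = iterRes A f + iterRes A g := iterCoeff_add A f g _

lemma iterRes_sum {n : ℕ} {ι : Type} (s : Finset ι) (F : ι → IterLaurent A n) :
    iterRes A (∑ i ∈ s, F i) = ∑ i ∈ s, iterRes A (F i) := by
  induction s using Finset.cons_induction with
  | empty => simpa using iterRes_zero A n
  | cons a s ha ih => rw [Finset.sum_cons, Finset.sum_cons, iterRes_add, ih]

lemma iterRes_succ (n : ℕ) (f : IterLaurent A (n+1)) :
    iterRes A f = iterRes A (f.down.coeff (-1)) := rfl

/-- Section of the residue map. -/
def resSec : (n : ℕ) → A → IterLaurent A n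
  | 0, a => a
  | n+1, a => IterLaurent.up (HahnSeries.single (-1) (resSec n a))

lemma iterRes_resSec : ∀ (n : ℕ) (a : A), iterRes A (resSec A n a) = a
  | 0, a => rfl
  | n+1, a => by
    rw [iterRes_succ]
    show iterRes A ((HahnSeries.single (-1 : ℤ) (resSec A n a)).coeff (-1)) = a
    rw [HahnSeries.coeff_single_same]
    exact iterRes_resSec n a

lemma pderiv_castSucc_coeff (n : ℕ) (j : Fin n) (f : IterLaurent A (n+1)) (k : ℤ) :
    (pderivIter A j.castSucc f).down.coeff k = pderivIter A j (f.down.coeff k) := by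
  rw [pderivIter]
  unfold pderivHom
  rw [dif_pos (show ((j.castSucc : Fin (n+1)) : ℕ) < n from j.isLt)]
  have : (⟨((j.castSucc : Fin (n+1)) : ℕ), j.isLt⟩ : Fin n) = j := by ext; simp
  rw [this]
  rfl

lemma pderiv_last_coeff (n : ℕ) (f : IterLaurent A (n+1)) (k : ℤ) :
    (pderivIter A (Fin.last n) f).down.coeff k = (k + 1) • f.down.coeff (k + 1) := by
  rw [pderivIter]
  unfold pderivHom
  rw [dif_neg (by simp : ¬ ((Fin.last n : Fin (n+1)) : ℕ) < n)]
  rfl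

lemma iterRes_pderiv : ∀ {n : ℕ} (j : Fin n) (f : IterLaurent A n),
    iterRes A (pderivIter A j f) = 0 := by
  intro n
  induction n with
  | zero => exact fun j => j.elim0
  | succ n ih =>
    intro j f
    rw [iterRes_succ]
    rcases Fin.eq_castSucc_or_eq_last j with ⟨i, rfl⟩ | rfl
    · rw [pderiv_castSucc_coeff]
      exact ih i _
    · rw [pderiv_last_coeff]
      norm_num
      exact iterCoeff_zero A _

lemma down_inj {n : ℕ} (a b : IterLaurent A (n+1))
    (h : ∀ k, a.down.coeff k = b.down.coeff k) : a = b := by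
  have : a.down = b.down := HahnSeries.coeff_inj.mp (funext h)
  exact this

lemma pderiv_castSucc_single {n : ℕ} (j : Fin n) (c : ℤ) (x : IterLaurent A n) :
    pderivIter A j.castSucc (IterLaurent.up (HahnSeries.single c x)) =
      IterLaurent.up (HahnSeries.single c (pderivIter A j x)) := by
  apply down_inj
  intro k
  rw [pderiv_castSucc_coeff]
  show pderivIter A j ((HahnSeries.single c x).coeff k) = (HahnSeries.single c _).coeff k
  rw [HahnSeries.coeff_single, HahnSeries.coeff_single]
  split
  · rfl
  · exact map_zero (pderivHom A j)

lemma up_sum {n : ℕ} {ι : Type} (s : Finset ι) (F : ι → HahnSeries ℤ (IterLaurent A n)) :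
    ∑ i ∈ s, IterLaurent.up (F i) = IterLaurent.up (∑ i ∈ s, F i) := by
  induction s using Finset.cons_induction with
  | empty => rfl
  | cons a s ha ih =>
    rw [Finset.sum_cons, Finset.sum_cons, ih]
    rfl

variable [Algebra ℚ A]

lemma zsmul_qC_mul (n : ℕ) (k : ℤ) (hk : k ≠ 0) (x : IterLaurent A n) :
    k • (iterC A n (algebraMap ℚ A (k : ℚ)⁻¹) * x) = x := by
  rw [zsmul_eq_mul, ← mul_assoc]
  have h1 : (k : IterLaurent A n) = iterC A n (algebraMap ℚ A (k : ℚ)) := by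
    rw [map_intCast, map_intCast]
  rw [h1, ← map_mul, ← map_mul, mul_inv_cancel₀ (by exact_mod_cast hk), map_one, map_one, one_mul]

/-- Antiderivative in the outer variable (killing the `t⁻¹` term). -/
def antider (n : ℕ) (f : HahnSeries ℤ (IterLaurent A n)) : HahnSeries ℤ (IterLaurent A n) where
  coeff k := if k = 0 then 0 else iterC A n (algebraMap ℚ A (k : ℚ)⁻¹) * f.coeff (k-1)
  isPWO_support' := by
    have himg : (Function.support fun k : ℤ =>
        if k = 0 then 0 else iterC A n (algebraMap ℚ A (k : ℚ)⁻¹) * f.coeff (k-1)) ⊆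
        (fun k : ℤ => k + 1) '' f.support := by
      intro k hk
      simp only [Function.mem_support] at hk
      refine ⟨k - 1, ?_, by ring⟩
      intro h0
      apply hk
      split
      · rfl
      · rw [h0, mul_zero]
    exact (f.isPWO_support.image_of_monotone (fun a b hab => by omega)).mono himg

lemma hahnDeriv_antider (n : ℕ) (f : HahnSeries ℤ (IterLaurent A n)) :
    hahnDerivHom (IterLaurent A n) (antider A n f) =
      f - HahnSeries.single (-1) (f.coeff (-1)) := by
  ext k
  show (k + 1) • (antider A n f).coeff (k+1) = _
  rw [HahnSeries.coeff_sub, HahnSeries.coeff_single]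
  show (k + 1) • (if k + 1 = 0 then 0 else
      iterC A n (algebraMap ℚ A ((k+1 : ℤ) : ℚ)⁻¹) * f.coeff (k+1-1)) = _
  by_cases h : k = -1
  · subst h
    norm_num
  · rw [if_neg (by omega : ¬ k + 1 = 0), if_neg h]
    have : k + 1 - 1 = k := by ring
    rw [this, zsmul_qC_mul A n (k+1) (by omega), sub_zero]

lemma res_zero_imp : ∀ {n : ℕ} (f : IterLaurent A n), iterRes A f = 0 →
    ∃ h : Fin n → IterLaurent A n, f = ∑ j : Fin n, pderivIter A j (h j) := by
  intro n
  induction n with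
  | zero =>
    intro f hf
    refine ⟨fun j => j.elim0, ?_⟩
    have h0 : f = (0 : A) := hf
    rw [h0]
    simp
    rfl
  | succ n ih =>
    intro f hf
    rw [iterRes_succ] at hf
    obtain ⟨h', hh'⟩ := ih _ hf
    refine ⟨Fin.snoc (fun j => IterLaurent.up (HahnSeries.single (-1) (h' j)))
      (IterLaurent.up (antider A n f.down)), ?_⟩
    rw [Fin.sum_univ_castSucc]
    simp only [Fin.snoc_castSucc, Fin.snoc_last]
    have hlast : pderivIter A (Fin.last n) (IterLaurent.up (antider A n f.down)) =
        IterLaurent.up (f.down - HahnSeries.single (-1) (f.down.coeff (-1))) := by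
      apply down_inj
      intro k
      rw [pderiv_last_coeff]
      have := congrArg (fun z : HahnSeries ℤ (IterLaurent A n) => z.coeff k)
        (hahnDeriv_antider A n f.down)
      exact this
    rw [hlast]
    have hcast : ∀ j : Fin n,
        pderivIter A j.castSucc (IterLaurent.up (HahnSeries.single (-1) (h' j))) =
          IterLaurent.up (HahnSeries.single (-1) (pderivIter A j (h' j))) :=
      fun j => pderiv_castSucc_single A j (-1) (h' j)
    simp only [hcast]
    rw [up_sum]
    have hsingle : ∑ j : Fin n, HahnSeries.single (-1 : ℤ) (pderivIter A j (h' j)) =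
        HahnSeries.single (-1 : ℤ) (∑ j : Fin n, pderivIter A j (h' j)) :=
      (map_sum (HahnSeries.single.addMonoidHom (-1)) _ _).symm
    rw [hsingle, ← hh']
    have : IterLaurent.up (HahnSeries.single (-1 : ℤ) (f.down.coeff (-1))) +
        IterLaurent.up (f.down - HahnSeries.single (-1) (f.down.coeff (-1))) =
        IterLaurent.up (HahnSeries.single (-1 : ℤ) (f.down.coeff (-1)) +
          (f.down - HahnSeries.single (-1) (f.down.coeff (-1)))) := rfl
    rw [this]
    have h2 : HahnSeries.single (-1 : ℤ) (f.down.coeff (-1)) +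
        (f.down - HahnSeries.single (-1) (f.down.coeff (-1))) = f.down := by abel
    rw [h2]
    rfl

end Statement7Aux

/-! ## Statement 7 -/

/-- For `n ≥ 1` and a commutative ℚ-algebra `A`, the residue map
`res : Lⁿ(A) → A`, `f ↦ coeff_{(−1,…,−1)}(f)`, is surjective and its kernel consists
exactly of the sums `Σ_{j=1}^n ∂hⱼ/∂tⱼ`. -/
theorem statement7 (n : ℕ) (hn : 1 ≤ n) (A : Type) [CommRing A] [Algebra ℚ A] :
    Function.Surjective (fun f : IterLaurent A n => iterRes A f) ∧
    ∀ f : IterLaurent A n,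
      iterRes A f = 0 ↔
        ∃ h : Fin n → IterLaurent A n, f = ∑ j : Fin n, pderivIter A j (h j) := by
  constructor
  · intro a
    exact ⟨resSec A n a, iterRes_resSec A n a⟩
  · intro f
    constructor
    · exact res_zero_imp A f
    · rintro ⟨h, rfl⟩
      rw [iterRes_sum]
      exact Finset.sum_eq_zero fun j _ => iterRes_pderiv A j (h j)
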